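/- arXiv:2402.02322 — 9 statements merged into one kernel-verified Lean document; each statement's English description precedes it below -/
import Mathlib

section
/- Let λ₀ > 0, λ₁ ≥ 0, λ₂ > 0 and τ ∈ ℝ, and define h(u) = τ·u + λ₀·𝟙{u ≠ 0} + λ₁|u| + λ₂u² for u ∈ ℝ. If |τ| ≤ 2√(λ₀λ₂) + λ₁ then inf_{u ∈ ℝ} h(u) = 0, and if |τ| ≥ 2√(λ₀λ₂) + λ₁ then inf_{u ∈ ℝ} h(u) = λ₀ − (|τ| − λ₁)²/(4λ₂). -/
noncomputable section


/-- coordinatewise infimum of `h(u) = τu + λ₀·𝟙{u≠0} + λ₁|u| + λ₂u²`. -/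
theorem stmt0 (l0 l1 l2 τ : ℝ) (hl0 : 0 < l0) (hl1 : 0 ≤ l1) (hl2 : 0 < l2) :
    (|τ| ≤ 2 * Real.sqrt (l0 * l2) + l1 →
      IsGLB (Set.range fun u : ℝ =>
        τ * u + (if u ≠ 0 then l0 else 0) + l1 * |u| + l2 * u ^ 2) 0) ∧
    (2 * Real.sqrt (l0 * l2) + l1 ≤ |τ| →
      IsGLB (Set.range fun u : ℝ =>
        τ * u + (if u ≠ 0 then l0 else 0) + l1 * |u| + l2 * u ^ 2)
        (l0 - (|τ| - l1) ^ 2 / (4 * l2))) := by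
  have hsm : Real.sqrt (l0 * l2) = Real.sqrt l0 * Real.sqrt l2 :=
    Real.sqrt_mul hl0.le l2
  have hs0 : Real.sqrt l0 ^ 2 = l0 := Real.sq_sqrt hl0.le
  have hs2 : Real.sqrt l2 ^ 2 = l2 := Real.sq_sqrt hl2.le
  have hs0p : 0 < Real.sqrt l0 := Real.sqrt_pos.mpr hl0
  have hs2p : 0 < Real.sqrt l2 := Real.sqrt_pos.mpr hl2
  constructor
  · intro hτ
    apply IsLeast.isGLB
    refine ⟨⟨0, by simp⟩, ?_⟩
    rintro x ⟨u, rfl⟩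
    by_cases hu : u = 0
    · simp [hu]
    · simp only [hu, if_pos, ne_eq, not_false_eq_true]
      have h1 : -(|τ| * |u|) ≤ τ * u := by
        have := neg_abs_le (τ * u)
        rwa [abs_mul] at this
      have hun : 0 < |u| := abs_pos.mpr hu
      have hsq : u ^ 2 = |u| ^ 2 := (sq_abs u).symm
      rw [hsm] at hτ
      nlinarith [sq_nonneg (Real.sqrt l0 - Real.sqrt l2 * |u|),
        mul_le_mul_of_nonneg_right hτ hun.le]
  · intro hτ
    have hA : 2 * Real.sqrt (l0 * l2) ≤ |τ| - l1 := by linarith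
    have hApos : 0 < |τ| - l1 := by
      have : 0 < Real.sqrt (l0 * l2) := Real.sqrt_pos.mpr (by positivity)
      linarith
    have hmle : l0 - (|τ| - l1) ^ 2 / (4 * l2) ≤ 0 := by
      rw [hsm] at hA
      rw [sub_nonpos, le_div_iff₀ (by positivity)]
      nlinarith [mul_le_mul hA hA (by positivity) hApos.le]
    apply IsLeast.isGLB
    constructor
    · -- witness
      set u : ℝ := -(τ / |τ|) * ((|τ| - l1) / (2 * l2)) with hu
      have hτ0 : τ ≠ 0 := by
        intro h; rw [h, abs_zero] at hApos hτ; linarith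
      have habs : |τ| ≠ 0 := abs_ne_zero.mpr hτ0
      have hune : u ≠ 0 := by
        rw [hu]
        exact mul_ne_zero (neg_ne_zero.mpr (div_ne_zero hτ0 habs))
          (div_ne_zero (ne_of_gt hApos) (by positivity))
      refine ⟨u, ?_⟩
      have hτu : τ * u = -(|τ| * ((|τ| - l1) / (2 * l2))) := by
        rw [hu]; field_simp
        linear_combination abs_mul_abs_self τ
      have huabs : |u| = (|τ| - l1) / (2 * l2) := by
        rw [hu, abs_mul, abs_neg, abs_div, abs_abs, div_self habs, one_mul,
          abs_of_pos (by positivity)]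
      have hu2 : u ^ 2 = ((|τ| - l1) / (2 * l2)) ^ 2 := by
        rw [← sq_abs, huabs]
      show τ * u + (if u ≠ 0 then l0 else 0) + l1 * |u| + l2 * u ^ 2 = _
      rw [if_pos hune, hτu, huabs, hu2]
      field_simp
      ring
    · rintro x ⟨u, rfl⟩
      by_cases hu : u = 0
      · simp only [hu]; simpa using hmle
      · simp only [hu, if_pos, ne_eq, not_false_eq_true]
        have h1 : -(|τ| * |u|) ≤ τ * u := by
          have := neg_abs_le (τ * u)
          rwa [abs_mul] at this
        have hsq : u ^ 2 = |u| ^ 2 := (sq_abs u).symm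
        rw [sub_le_comm, le_div_iff₀ (by positivity : (0:ℝ) < 4 * l2), hsq]
        nlinarith [mul_le_mul_of_nonneg_right h1 (by positivity : (0:ℝ) ≤ 4 * l2),
          sq_nonneg (2 * l2 * |u| - (|τ| - l1))]
end
end

section
/- Let λ₀ > 0, λ₁ ≥ 0, λ₂ > 0 and τ ∈ ℝ, define h(u) = τ·u + λ₀·𝟙{u ≠ 0} + λ₁|u| + λ₂u² for u ∈ ℝ, and set û = −sign(τ)·(|τ| − λ₁)/(2λ₂). Then: (i) if |τ| > 2√(λ₀λ₂) + λ₁, û attains the infimum of h over ℝ and h(û) < h(0) = 0; (ii) if |τ| < 2√(λ₀λ₂) + λ₁, then 0 is the unique minimizer of h, i.e. h(u) > h(0) = 0 for every u ≠ 0; (iii) if |τ| = 2√(λ₀λ₂) + λ₁, then both 0 and û attain the infimum of h, which equals 0. -/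
noncomputable section


/-- characterization of the minimizers of
`h(u) = τu + λ₀·𝟙{u≠0} + λ₁|u| + λ₂u²`. -/
theorem stmt1 (l0 l1 l2 τ : ℝ) (hl0 : 0 < l0) (hl1 : 0 ≤ l1) (hl2 : 0 < l2)
    (h : ℝ → ℝ)
    (hdef : ∀ u, h u = τ * u + (if u ≠ 0 then l0 else 0) + l1 * |u| + l2 * u ^ 2)
    (uhat : ℝ) (huhat : uhat = -(Real.sign τ) * (|τ| - l1) / (2 * l2)) :
    (2 * Real.sqrt (l0 * l2) + l1 < |τ| →
      (∀ u, h uhat ≤ h u) ∧ h uhat < h 0 ∧ h 0 = 0) ∧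
    (|τ| < 2 * Real.sqrt (l0 * l2) + l1 →
      h 0 = 0 ∧ ∀ u, u ≠ 0 → h 0 < h u) ∧
    (|τ| = 2 * Real.sqrt (l0 * l2) + l1 →
      (∀ u, h 0 ≤ h u) ∧ h uhat = 0 ∧ h 0 = 0) := by
  have h0 : h 0 = 0 := by simp [hdef]
  set s := Real.sqrt (l0 * l2) with hs
  have hs2 : s ^ 2 = l0 * l2 := Real.sq_sqrt (by positivity)
  have hspos : 0 < s := Real.sqrt_pos.mpr (by positivity)
  set a := |τ| - l1 with ha
  -- lower bound for u ≠ 0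
  have hlb : ∀ u : ℝ, u ≠ 0 → l0 - a * |u| + l2 * |u| ^ 2 ≤ h u := by
    intro u hu
    rw [hdef, if_pos hu]
    have h1 : -(|τ| * |u|) ≤ τ * u := by
      rw [← abs_mul]
      exact neg_abs_le _
    have h2 : |u| ^ 2 = u ^ 2 := sq_abs u
    nlinarith [abs_nonneg u]
  -- value of h at uhat, when l1 < |τ|
  have hval : l1 < |τ| → uhat ≠ 0 ∧ h uhat = l0 - a ^ 2 / (4 * l2) := by
    intro hlt
    have hτ : τ ≠ 0 := by
      intro h'
      rw [h', abs_zero] at hlt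
      linarith
    have hane : 0 < a := by simp [ha]; linarith
    rcases lt_or_gt_of_ne hτ with htn | htp
    · -- τ < 0 : sign = -1, uhat = a/(2l2) > 0
      rw [Real.sign_of_neg htn] at huhat
      have huv : uhat = a / (2 * l2) := by rw [huhat]; ring_nf
      have hupos : 0 < uhat := by rw [huv]; positivity
      have hune : uhat ≠ 0 := ne_of_gt hupos
      refine ⟨hune, ?_⟩
      rw [hdef, if_pos hune, abs_of_pos hupos, huv]
      have hτa : τ = -(a + l1) := by
        rw [ha]; linarith [abs_of_neg htn]
      rw [hτa]
      field_simp
      ring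
    · -- τ > 0 : sign = 1, uhat = -a/(2l2) < 0
      rw [Real.sign_of_pos htp] at huhat
      have huv : uhat = -(a / (2 * l2)) := by rw [huhat]; ring_nf
      have huneg : uhat < 0 := by
        rw [huv]
        have : 0 < a / (2 * l2) := by positivity
        linarith
      have hune : uhat ≠ 0 := ne_of_lt huneg
      refine ⟨hune, ?_⟩
      rw [hdef, if_pos hune, abs_of_neg huneg, huv]
      have hτa : τ = a + l1 := by
        rw [ha]; linarith [abs_of_pos htp]
      rw [hτa]
      field_simp
      ring
  refine ⟨?_, ?_, ?_⟩
  · -- case (i)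
    intro hcase
    have hlt : l1 < |τ| := by nlinarith
    obtain ⟨hune, hv⟩ := hval hlt
    have hasq : 4 * l0 * l2 < a ^ 2 := by nlinarith [ha]
    have hneg : h uhat < 0 := by
      rw [hv, sub_neg, lt_div_iff₀ (by positivity : (0:ℝ) < 4 * l2)]
      nlinarith
    refine ⟨?_, by rw [h0]; exact hneg, h0⟩
    intro u
    by_cases hu : u = 0
    · rw [hu, h0]; linarith
    · have := hlb u hu
      have hq : l0 - a ^ 2 / (4 * l2) ≤ l0 - a * |u| + l2 * |u| ^ 2 := by
        have hk : a * |u| - l2 * |u| ^ 2 ≤ a ^ 2 / (4 * l2) := by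
          rw [le_div_iff₀ (by positivity : (0:ℝ) < 4 * l2)]
          nlinarith [sq_nonneg (2 * l2 * |u| - a)]
        linarith
      linarith [hv ▸ (hq.trans this)]
  · -- case (ii)
    intro hcase
    refine ⟨h0, ?_⟩
    intro u hu
    rw [h0]
    have hl := hlb u hu
    have hupos : 0 < |u| := abs_pos.mpr hu
    rcases le_or_gt a 0 with hA | hA
    · nlinarith
    · have hasq : a ^ 2 < 4 * l0 * l2 := by nlinarith
      have : 0 < l0 - a * |u| + l2 * |u| ^ 2 := by
        nlinarith [sq_nonneg (2 * l2 * |u| - a)]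
      linarith
  · -- case (iii)
    intro hcase
    have hlt : l1 < |τ| := by nlinarith
    obtain ⟨hune, hv⟩ := hval hlt
    have hasq : a ^ 2 = 4 * l0 * l2 := by
      have : a = 2 * s := by simp [ha]; linarith
      rw [this]; nlinarith
    have hvz : h uhat = 0 := by
      rw [hv, hasq]
      field_simp
      ring
    refine ⟨?_, hvz, h0⟩
    intro u
    rw [h0]
    by_cases hu : u = 0
    · rw [hu, h0]
    · have hl := hlb u hu
      have : 0 ≤ l0 - a * |u| + l2 * |u| ^ 2 := by
        nlinarith [sq_nonneg (2 * l2 * |u| - a)]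
      linarith
end
end

section
/- For every α ∈ ℝ^n, the infimum over β ∈ ℝ^p of the Lagrangian L(β, α) equals the dual objective D(α), i.e. inf_{β ∈ ℝ^p} L(β, α) = D(α). -/
noncomputable section

/-- ℓ₀ "norm": number of nonzero entries, as a real number. -/
def zeroNorm {p : ℕ} (β : EuclideanSpace ℝ (Fin p)) : ℝ :=
  ((Finset.univ.filter fun j => β j ≠ 0).card : ℝ)

/-- ℓ₁ norm. -/
def oneNorm {p : ℕ} (β : EuclideanSpace ℝ (Fin p)) : ℝ := ∑ j, |β j|

/-- `X β`, where `x j` is the `j`-th column of `X`. -/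
def Xmul {n p : ℕ} (x : Fin p → EuclideanSpace ℝ (Fin n))
    (β : EuclideanSpace ℝ (Fin p)) : EuclideanSpace ℝ (Fin n) :=
  ∑ j, β j • x j

/-- Primal objective `P(β)`. -/
def Pobj {n p : ℕ} (x : Fin p → EuclideanSpace ℝ (Fin n)) (y : EuclideanSpace ℝ (Fin n))
    (l0 l1 l2 : ℝ) (β : EuclideanSpace ℝ (Fin p)) : ℝ :=
  (1/2) * ‖y - Xmul x β‖^2 + l0 * zeroNorm β + l1 * oneNorm β + l2 * ‖β‖^2

/-- Lagrangian `L(β, α)`. -/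
def Lag {n p : ℕ} (x : Fin p → EuclideanSpace ℝ (Fin n)) (y : EuclideanSpace ℝ (Fin n))
    (l0 l1 l2 : ℝ) (β : EuclideanSpace ℝ (Fin p)) (α : EuclideanSpace ℝ (Fin n)) : ℝ :=
  (inner ℝ α (Xmul x β) : ℝ) - (1/2) * ‖α‖^2 - (inner ℝ y α : ℝ)
    + l0 * zeroNorm β + l1 * oneNorm β + l2 * ‖β‖^2

/-- `η_j(α) = −⟨x_j, α⟩ / (2 λ₂)`. -/
def etav {n p : ℕ} (x : Fin p → EuclideanSpace ℝ (Fin n)) (l2 : ℝ)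
    (α : EuclideanSpace ℝ (Fin n)) (j : Fin p) : ℝ :=
  -(inner ℝ (x j) α : ℝ) / (2 * l2)

/-- Threshold `η₀ = (2√(λ₀λ₂) + λ₁)/(2λ₂)`. -/
def eta0 (l0 l1 l2 : ℝ) : ℝ := (2 * Real.sqrt (l0 * l2) + l1) / (2 * l2)

/-- Scalar function `ψ` appearing in the dual objective. -/
def psi (l0 l1 l2 : ℝ) (t : ℝ) : ℝ :=
  if eta0 l0 l1 l2 ≤ |t| then -l2 * (|t| - l1 / (2 * l2))^2 + l0 else 0

/-- Dual objective `D(α)` for the square loss. -/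
def Dobj {n p : ℕ} (x : Fin p → EuclideanSpace ℝ (Fin n)) (y : EuclideanSpace ℝ (Fin n))
    (l0 l1 l2 : ℝ) (α : EuclideanSpace ℝ (Fin n)) : ℝ :=
  -(1/2) * ‖α‖^2 - (inner ℝ y α : ℝ) + ∑ j : Fin p, psi l0 l1 l2 (etav x l2 α j)

/-- Thresholding map `𝔅`. -/
def Bth (l0 l1 l2 : ℝ) (t : ℝ) : ℝ :=
  if eta0 l0 l1 l2 ≤ |t| then Real.sign t * (|t| - l1 / (2 * l2)) else 0

/-- Primal-dual link `β(α)` with entries `β_j(α) = 𝔅(η_j(α))`. -/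
def betaOf {n p : ℕ} (x : Fin p → EuclideanSpace ℝ (Fin n)) (l0 l1 l2 : ℝ)
    (α : EuclideanSpace ℝ (Fin n)) : EuclideanSpace ℝ (Fin p) :=
  WithLp.toLp 2 (fun j => Bth l0 l1 l2 (etav x l2 α j))

/-- `(β̄, ᾱ)` is a saddle point of the Lagrangian `L`. -/
def IsSaddle {n p : ℕ} (x : Fin p → EuclideanSpace ℝ (Fin n)) (y : EuclideanSpace ℝ (Fin n))
    (l0 l1 l2 : ℝ) (βb : EuclideanSpace ℝ (Fin p)) (αb : EuclideanSpace ℝ (Fin n)) : Prop :=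
  (∀ α, Lag x y l0 l1 l2 βb α ≤ Lag x y l0 l1 l2 βb αb) ∧
  (∀ β, Lag x y l0 l1 l2 βb αb ≤ Lag x y l0 l1 l2 β αb)


lemma scalar_ge (l0 l1 l2 : ℝ) (hl0 : 0 < l0) (hl1 : 0 ≤ l1) (hl2 : 0 < l2)
    (t b : ℝ) :
    psi l0 l1 l2 t ≤ l2 * b^2 - 2*l2*t*b + l1 * |b| + (if b = 0 then 0 else l0) := by
  have hs : Real.sqrt (l0 * l2) ^ 2 = l0 * l2 := Real.sq_sqrt (by positivity)
  have hs0 : 0 < Real.sqrt (l0 * l2) := Real.sqrt_pos.2 (by positivity)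
  rw [psi, eta0]
  set s := Real.sqrt (l0 * l2) with hsdef
  set a := |t| - l1 / (2 * l2) with hadef
  have ha : 2 * l2 * a = 2 * l2 * |t| - l1 := by
    rw [hadef]; field_simp
  have habs : t * b ≤ |t| * |b| := (le_abs_self _).trans_eq (abs_mul t b)
  have hb2 : b^2 = |b|^2 := (sq_abs b).symm
  have hb0 : 0 ≤ |b| := abs_nonneg b
  by_cases h : (2*s + l1)/(2*l2) ≤ |t| <;>
    by_cases hb : b = 0
  · simp only [if_pos h]
    subst hb
    rw [div_le_iff₀ (by positivity)] at h
    have h2 : s ≤ l2 * a := by nlinarith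
    norm_num
    nlinarith [sq_nonneg (l2*a - s), mul_pos hl2 hl2]
  · simp only [if_pos h, if_neg hb]
    rw [div_le_iff₀ (by positivity)] at h
    have ha2 : 2*l2*a*|b| = (2*l2*|t| - l1)*|b| := by rw [← ha]
    nlinarith [mul_nonneg hl2.le (sq_nonneg (|b| - a)), mul_nonneg hl2.le (sub_nonneg.2 habs), ha2]
  · subst hb; simp [if_neg h]
  · simp only [if_neg h, if_neg hb]
    push_neg at h
    rw [lt_div_iff₀ (by positivity)] at h
    have h2' : (0:ℝ) ≤ 2*s - 2*l2*a := by nlinarith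
    have ha2 : 2*l2*a*|b| = (2*l2*|t| - l1)*|b| := by rw [← ha]
    have key : 0 ≤ l2 * (l2*b^2 - 2*l2*t*b + l1*|b| + l0) := by
      nlinarith [sq_nonneg (l2*|b| - s), mul_nonneg (mul_nonneg hl2.le hb0) h2',
        mul_nonneg (mul_nonneg hl2.le hl2.le) (sub_nonneg.2 habs), ha2]
    nlinarith [key]

lemma scalar_eq (l0 l1 l2 : ℝ) (hl0 : 0 < l0) (hl1 : 0 ≤ l1) (hl2 : 0 < l2) (t : ℝ) :
    l2 * (Bth l0 l1 l2 t)^2 - 2*l2*t*(Bth l0 l1 l2 t) + l1 * |Bth l0 l1 l2 t|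
      + (if Bth l0 l1 l2 t = 0 then 0 else l0) = psi l0 l1 l2 t := by
  have hs : Real.sqrt (l0 * l2) ^ 2 = l0 * l2 := Real.sq_sqrt (by positivity)
  have hs0 : 0 < Real.sqrt (l0 * l2) := Real.sqrt_pos.2 (by positivity)
  rw [Bth, psi]
  by_cases h : eta0 l0 l1 l2 ≤ |t|
  · simp only [if_pos h]
    have heta : (2 * Real.sqrt (l0 * l2) + l1) / (2 * l2) ≤ |t| := h
    rw [div_le_iff₀ (by positivity)] at heta
    have hapos : 0 < |t| - l1 / (2 * l2) := by
      rw [sub_pos, div_lt_iff₀ (by positivity)]; nlinarith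
    have ht0 : t ≠ 0 := by
      intro h0; rw [h0, abs_zero] at hapos; nlinarith [div_nonneg hl1 (by linarith : (0:ℝ) ≤ 2*l2)]
    rcases lt_or_gt_of_ne ht0 with htn | htp
    · rw [Real.sign_of_neg htn, abs_of_neg htn] at *
      have hb : (-1 : ℝ) * (-t - l1 / (2 * l2)) ≠ 0 := by intro hc; nlinarith
      rw [if_neg hb, abs_mul, abs_of_pos hapos]
      norm_num
      field_simp
      ring
    · rw [Real.sign_of_pos htp, abs_of_pos htp] at *
      have hb : (1 : ℝ) * (t - l1 / (2 * l2)) ≠ 0 := by intro hc; nlinarith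
      rw [if_neg hb, abs_mul, abs_of_pos hapos]
      norm_num
      field_simp
      ring
  · simp [if_neg h]

lemma Lag_decomp {n p : ℕ} (x : Fin p → EuclideanSpace ℝ (Fin n))
    (y : EuclideanSpace ℝ (Fin n)) (l0 l1 l2 : ℝ) (hl2 : 0 < l2)
    (β : EuclideanSpace ℝ (Fin p)) (α : EuclideanSpace ℝ (Fin n)) :
    Lag x y l0 l1 l2 β α = -(1/2) * ‖α‖^2 - (inner ℝ y α : ℝ)
      + ∑ j, (l2 * (β j)^2 - 2*l2*(etav x l2 α j)*(β j) + l1 * |β j|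
          + (if β j = 0 then 0 else l0)) := by
  have h1 : (inner ℝ α (Xmul x β) : ℝ) = ∑ j, -2*l2*(etav x l2 α j)*(β j) := by
    rw [Xmul, inner_sum]
    refine Finset.sum_congr rfl fun j _ => ?_
    rw [real_inner_smul_right, etav, real_inner_comm]
    field_simp
  have h2 : l0 * zeroNorm β = ∑ j, (if β j = 0 then 0 else l0) := by
    rw [zeroNorm, Finset.card_filter]
    push_cast
    rw [Finset.mul_sum]
    refine Finset.sum_congr rfl fun j _ => ?_
    by_cases hb : β j = 0 <;> simp [hb]
  have h3 : l1 * oneNorm β = ∑ j, l1 * |β j| := by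
    rw [oneNorm, Finset.mul_sum]
  have h4 : l2 * ‖β‖^2 = ∑ j, l2 * (β j)^2 := by
    rw [EuclideanSpace.norm_eq, Real.sq_sqrt (by positivity), Finset.mul_sum]
    refine Finset.sum_congr rfl fun j _ => ?_
    rw [Real.norm_eq_abs, sq_abs]
  rw [Lag, h1, h2, h3, h4]
  have h5 : ∀ j ∈ Finset.univ, (l2 * (β j)^2 - 2*l2*(etav x l2 α j)*(β j) + l1 * |β j|
      + (if β j = 0 then 0 else l0))
      = (-2*l2*(etav x l2 α j)*(β j)) + (if β j = 0 then 0 else l0) + l1 * |β j|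
        + l2 * (β j)^2 := fun j _ => by ring
  rw [Finset.sum_congr rfl h5, Finset.sum_add_distrib, Finset.sum_add_distrib,
    Finset.sum_add_distrib]
  ring

/-- `inf_{β} L(β, α) = D(α)` for every `α`. -/
theorem stmt2 (n p : ℕ) (x : Fin p → EuclideanSpace ℝ (Fin n))
    (y : EuclideanSpace ℝ (Fin n)) (l0 l1 l2 : ℝ)
    (hl0 : 0 < l0) (hl1 : 0 ≤ l1) (hl2 : 0 < l2)
    (α : EuclideanSpace ℝ (Fin n)) :
    IsGLB (Set.range fun β : EuclideanSpace ℝ (Fin p) => Lag x y l0 l1 l2 β α)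
      (Dobj x y l0 l1 l2 α) := by
  have hle : ∀ β : EuclideanSpace ℝ (Fin p),
      Dobj x y l0 l1 l2 α ≤ Lag x y l0 l1 l2 β α := by
    intro β
    rw [Lag_decomp x y l0 l1 l2 hl2, Dobj]
    have := Finset.sum_le_sum (fun j (_ : j ∈ Finset.univ) =>
      scalar_ge l0 l1 l2 hl0 hl1 hl2 (etav x l2 α j) (β j))
    linarith
  have heq : Lag x y l0 l1 l2 (betaOf x l0 l1 l2 α) α = Dobj x y l0 l1 l2 α := by
    rw [Lag_decomp x y l0 l1 l2 hl2, Dobj]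
    have : ∀ j ∈ Finset.univ, l2 * (betaOf x l0 l1 l2 α j)^2
        - 2*l2*(etav x l2 α j)*(betaOf x l0 l1 l2 α j) + l1 * |betaOf x l0 l1 l2 α j|
        + (if betaOf x l0 l1 l2 α j = 0 then 0 else l0) = psi l0 l1 l2 (etav x l2 α j) :=
      fun j _ => scalar_eq l0 l1 l2 hl0 hl1 hl2 (etav x l2 α j)
    rw [Finset.sum_congr rfl this]
  refine IsLeast.isGLB ⟨⟨betaOf x l0 l1 l2 α, heq⟩, ?_⟩
  rintro r ⟨β, rfl⟩
  exact hle β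
end
end

section
/- Weak duality holds: for every α ∈ ℝ^n and every β ∈ ℝ^p, D(α) ≤ P(β). -/
noncomputable section

lemma scalar_key (l0 l1 l2 t b : ℝ) (hl0 : 0 < l0) (hl1 : 0 ≤ l1) (hl2 : 0 < l2) :
    psi l0 l1 l2 t ≤ -(2 * l2 * t) * b + l0 * (if b = 0 then 0 else 1)
      + l1 * |b| + l2 * b ^ 2 := by
  have hs : Real.sqrt (l0 * l2) ^ 2 = l0 * l2 := Real.sq_sqrt (by positivity)
  have hs0 : 0 ≤ Real.sqrt (l0 * l2) := Real.sqrt_nonneg _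
  set s := Real.sqrt (l0 * l2) with hsdef
  have hu : l1 = 2 * l2 * (l1 / (2 * l2)) := by field_simp
  set u := l1 / (2 * l2) with hudef
  have hu0 : 0 ≤ u := by positivity
  have htb : t * b ≤ |t| * |b| := by rw [← abs_mul]; exact le_abs_self _
  have hb0 : 0 ≤ |b| := abs_nonneg b
  have ht0 : 0 ≤ |t| := abs_nonneg t
  have hbsq : b ^ 2 = |b| ^ 2 := (sq_abs b).symm
  by_cases hb : b = 0
  · subst hb
    simp only [if_pos rfl, abs_zero]
    unfold psi
    split_ifs with h
    · unfold eta0 at h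
      rw [div_le_iff₀ (by positivity)] at h
      have hd : s ≤ l2 * (|t| - u) := by nlinarith
      have hd2 : s * s ≤ (l2 * (|t| - u)) * (l2 * (|t| - u)) :=
        mul_self_le_mul_self hs0 hd
      nlinarith
    · norm_num
  · rw [if_neg hb]
    unfold psi
    split_ifs with h
    · have hmul : 2 * l2 * (t * b) ≤ 2 * l2 * (|t| * |b|) := by nlinarith
      nlinarith [sq_nonneg (|b| - (|t| - u)), mul_nonneg hl2.le (sq_nonneg (|b| - (|t| - u)))]
    · push_neg at h
      unfold eta0 at h
      rw [lt_div_iff₀ (by positivity)] at h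
      have hmul : 2 * l2 * (t * b) ≤ 2 * l2 * (|t| * |b|) := by nlinarith
      have hmul2 : (|t| * (2 * l2)) * |b| ≤ (2 * s + l1) * |b| :=
        mul_le_mul_of_nonneg_right h.le hb0
      have hk2 : 0 ≤ l2 * (l2 * |b| ^ 2 - 2 * s * |b| + l0) := by
        nlinarith [sq_nonneg (l2 * |b| - s)]
      have hkey : 0 ≤ l2 * |b| ^ 2 - 2 * s * |b| + l0 := by
        by_contra hc; push_neg at hc; nlinarith
      rw [hbsq]
      linarith [hmul, hmul2, hkey]

lemma Dobj_le_Lag {n p : ℕ} (x : Fin p → EuclideanSpace ℝ (Fin n))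
    (y : EuclideanSpace ℝ (Fin n)) (l0 l1 l2 : ℝ)
    (hl0 : 0 < l0) (hl1 : 0 ≤ l1) (hl2 : 0 < l2)
    (α : EuclideanSpace ℝ (Fin n)) (β : EuclideanSpace ℝ (Fin p)) :
    Dobj x y l0 l1 l2 α ≤ Lag x y l0 l1 l2 β α := by
  have h1 : (inner ℝ α (Xmul x β) : ℝ) = ∑ j, β j * (inner ℝ (x j) α : ℝ) := by
    simp only [Xmul, inner_sum, real_inner_smul_right, PiLp.inner_apply,
      RCLike.inner_apply, conj_trivial, Finset.sum_apply, PiLp.smul_apply, smul_eq_mul]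
    exact Finset.sum_congr rfl fun j _ => by
      rw [Finset.mul_sum]; exact Finset.sum_congr rfl fun i _ => by ring
  have h2 : zeroNorm β = ∑ j, (if β j = 0 then (0:ℝ) else 1) := by
    unfold zeroNorm
    rw [Finset.card_filter]
    push_cast
    exact Finset.sum_congr rfl (fun j _ => by by_cases h : β j = 0 <;> simp [h])
  have h3 : ‖β‖ ^ 2 = ∑ j, (β j) ^ 2 := by
    rw [← real_inner_self_eq_norm_sq]
    simp only [PiLp.inner_apply, RCLike.inner_apply, conj_trivial, sq]
  have key : ∑ j : Fin p, psi l0 l1 l2 (etav x l2 α j) ≤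
      ∑ j, (β j * (inner ℝ (x j) α : ℝ) + l0 * (if β j = 0 then (0:ℝ) else 1)
        + l1 * |β j| + l2 * (β j) ^ 2) := by
    apply Finset.sum_le_sum
    intro j _
    have ht : -(2 * l2 * etav x l2 α j) = (inner ℝ (x j) α : ℝ) := by
      unfold etav
      field_simp
    calc psi l0 l1 l2 (etav x l2 α j)
        ≤ -(2 * l2 * etav x l2 α j) * β j + l0 * (if β j = 0 then 0 else 1)
          + l1 * |β j| + l2 * (β j) ^ 2 :=
          scalar_key l0 l1 l2 _ _ hl0 hl1 hl2
      _ = _ := by rw [ht]; ring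
  unfold Dobj Lag oneNorm
  rw [h1, h2, h3, Finset.mul_sum, Finset.mul_sum, Finset.mul_sum]
  have := key
  simp only [Finset.sum_add_distrib] at this ⊢
  linarith

lemma Lag_le_Pobj {n p : ℕ} (x : Fin p → EuclideanSpace ℝ (Fin n))
    (y : EuclideanSpace ℝ (Fin n)) (l0 l1 l2 : ℝ)
    (α : EuclideanSpace ℝ (Fin n)) (β : EuclideanSpace ℝ (Fin p)) :
    Lag x y l0 l1 l2 β α ≤ Pobj x y l0 l1 l2 β := by
  unfold Lag Pobj
  have hexp := norm_add_sq_real (y - Xmul x β) α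
  rw [inner_sub_left] at hexp
  have hc : (inner ℝ α (Xmul x β) : ℝ) = inner ℝ (Xmul x β) α := real_inner_comm _ _
  have hy : (inner ℝ y α : ℝ) = inner ℝ y α := rfl
  nlinarith [sq_nonneg ‖y - Xmul x β + α‖]

/-- weak duality `D(α) ≤ P(β)`. -/
theorem stmt6 (n p : ℕ) (x : Fin p → EuclideanSpace ℝ (Fin n))
    (y : EuclideanSpace ℝ (Fin n)) (l0 l1 l2 : ℝ)
    (hl0 : 0 < l0) (hl1 : 0 ≤ l1) (hl2 : 0 < l2)
    (α : EuclideanSpace ℝ (Fin n)) (β : EuclideanSpace ℝ (Fin p)) :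
    Dobj x y l0 l1 l2 α ≤ Pobj x y l0 l1 l2 β := by
  exact le_trans (Dobj_le_Lag x y l0 l1 l2 hl0 hl1 hl2 α β)
    (Lag_le_Pobj x y l0 l1 l2 α β)
end
end

section
/- Define g(α) = Xβ(α) − α − y for α ∈ ℝ^n, where β(α) has entries β_j(α) = 𝔅(η_j(α)). Then g(α) is a supergradient of the 1-strongly concave function D: for all α₁, α₂ ∈ ℝ^n, D(α₁) ≤ D(α₂) + ⟨g(α₂), α₁ − α₂⟩ − (1/2)‖α₁ − α₂‖². -/
noncomputable section

lemma psi_le_aux (l0 l1 l2 : ℝ) (hl0 : 0 < l0) (hl1 : 0 ≤ l1) (hl2 : 0 < l2) (s t : ℝ) :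
    psi l0 l1 l2 s ≤ psi l0 l1 l2 t - 2 * l2 * Bth l0 l1 l2 t * (s - t) := by
  set c := l1 / (2 * l2) with hcdef
  set h0 := eta0 l0 l1 l2 with hh0def
  have hsq : Real.sqrt (l0*l2) ^ 2 = l0 * l2 := Real.sq_sqrt (by positivity)
  have hpos : 0 < Real.sqrt (l0*l2) := Real.sqrt_pos.mpr (by positivity)
  have hh0 : h0 - c = Real.sqrt (l0*l2) / l2 := by
    rw [hh0def, hcdef]; unfold eta0; field_simp; ring
  have hkey : l2 * (h0 - c)^2 = l0 := by
    rw [hh0, div_pow, hsq]; field_simp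
  have hc0 : 0 ≤ c := by rw [hcdef]; positivity
  have hcc : c < h0 := by
    linarith [hh0, div_pos hpos hl2]
  unfold psi Bth
  rw [← hh0def, ← hcdef]
  by_cases ht : h0 ≤ |t|
  · simp only [ht, if_true]
    rcases lt_trichotomy t 0 with htn | hte | htp
    · rw [Real.sign_of_neg htn, abs_of_neg htn]
      have htc : 0 ≤ -t - c := by
        have := abs_of_neg htn ▸ ht; linarith
      by_cases hs : h0 ≤ |s|
      · simp only [hs, if_true]
        have h1 : 0 ≤ l2 * (-t - c) * (s + |s|) :=
          mul_nonneg (mul_nonneg hl2.le htc) (by linarith [neg_abs_le s])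
        have h2 : 0 ≤ l2 * (|s| + t)^2 := by positivity
        nlinarith [h1, h2]
      · simp only [hs, if_false]
        push_neg at hs
        have h1 : 0 ≤ l2 * (-t - c) * (s + h0) :=
          mul_nonneg (mul_nonneg hl2.le htc) (by linarith [neg_abs_le s])
        have h2 : 0 ≤ l2 * (t + h0)^2 := by positivity
        nlinarith [h1, h2, hkey]
    · exfalso; rw [hte] at ht; simp at ht; linarith
    · rw [Real.sign_of_pos htp, abs_of_pos htp]
      have htc : 0 ≤ t - c := by
        have := abs_of_pos htp ▸ ht; linarith
      by_cases hs : h0 ≤ |s|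
      · simp only [hs, if_true]
        have h1 : 0 ≤ l2 * (t - c) * (|s| - s) :=
          mul_nonneg (mul_nonneg hl2.le htc) (by linarith [le_abs_self s])
        have h2 : 0 ≤ l2 * (|s| - t)^2 := by positivity
        nlinarith [h1, h2]
      · simp only [hs, if_false]
        push_neg at hs
        have h1 : 0 ≤ l2 * (t - c) * (h0 - s) :=
          mul_nonneg (mul_nonneg hl2.le htc) (by linarith [le_abs_self s])
        have h2 : 0 ≤ l2 * (t - h0)^2 := by positivity
        nlinarith [h1, h2, hkey]
  · simp only [ht, if_false]
    by_cases hs : h0 ≤ |s|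
    · simp only [hs, if_true]
      have hinner : (0:ℝ) ≤ (|s|-c)^2 - (h0-c)^2 := by
        nlinarith [mul_nonneg (sub_nonneg.mpr hs) (by linarith : (0:ℝ) ≤ |s| + h0 - 2*c)]
      have h1 : 0 ≤ l2 * ((|s|-c)^2 - (h0-c)^2) := mul_nonneg hl2.le hinner
      nlinarith [h1, hkey]
    · simp [hs]

/-- `g(α) = Xβ(α) − α − y` is a supergradient of the 1-strongly concave `D`. -/
theorem stmt10 (n p : ℕ) (x : Fin p → EuclideanSpace ℝ (Fin n))
    (y : EuclideanSpace ℝ (Fin n)) (l0 l1 l2 : ℝ)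
    (hl0 : 0 < l0) (hl1 : 0 ≤ l1) (hl2 : 0 < l2)
    (g : EuclideanSpace ℝ (Fin n) → EuclideanSpace ℝ (Fin n))
    (hg : ∀ α, g α = Xmul x (betaOf x l0 l1 l2 α) - α - y) :
    ∀ α₁ α₂ : EuclideanSpace ℝ (Fin n),
      Dobj x y l0 l1 l2 α₁ ≤ Dobj x y l0 l1 l2 α₂ + (inner ℝ (g α₂) (α₁ - α₂) : ℝ)
        - (1/2) * ‖α₁ - α₂‖ ^ 2 := by
  intro α₁ α₂
  set β := betaOf x l0 l1 l2 α₂ with hβ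
  set d := α₁ - α₂ with hd
  have hsum : ∑ j : Fin p, psi l0 l1 l2 (etav x l2 α₁ j)
      ≤ ∑ j : Fin p, psi l0 l1 l2 (etav x l2 α₂ j) + ∑ j : Fin p, β j * (inner ℝ (x j) d : ℝ) := by
    rw [← Finset.sum_add_distrib]
    apply Finset.sum_le_sum
    intro j _
    have h := psi_le_aux l0 l1 l2 hl0 hl1 hl2 (etav x l2 α₁ j) (etav x l2 α₂ j)
    have hdiff : etav x l2 α₁ j - etav x l2 α₂ j = -(inner ℝ (x j) d : ℝ) / (2 * l2) := by
      rw [hd]; unfold etav; rw [inner_sub_right]; ring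
    have heq : 2 * l2 * Bth l0 l1 l2 (etav x l2 α₂ j)
        * (etav x l2 α₁ j - etav x l2 α₂ j) = -(β j * (inner ℝ (x j) d : ℝ)) := by
      rw [hdiff, hβ]
      unfold betaOf
      field_simp
    linarith [h, heq]
  have hX : (inner ℝ (Xmul x β) d : ℝ) = ∑ j : Fin p, β j * (inner ℝ (x j) d : ℝ) := by
    unfold Xmul
    rw [sum_inner]
    exact Finset.sum_congr rfl fun j _ => real_inner_smul_left _ _ _
  have hnorm : ‖α₁‖^2 = ‖α₂‖^2 + 2 * (inner ℝ α₂ d : ℝ) + ‖d‖^2 := by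
    have : α₂ + d = α₁ := by rw [hd]; abel
    rw [← this, norm_add_sq_real]
  have hy : (inner ℝ y α₁ : ℝ) = (inner ℝ y α₂ : ℝ) + (inner ℝ y d : ℝ) := by
    rw [hd, inner_sub_right]; ring
  have hgα : (inner ℝ (g α₂) d : ℝ)
      = (inner ℝ (Xmul x β) d : ℝ) - (inner ℝ α₂ d : ℝ) - (inner ℝ y d : ℝ) := by
    rw [hg, ← hβ, inner_sub_left, inner_sub_left]
  unfold Dobj
  rw [hgα, hX]
  linarith [hsum, hnorm, hy]
end
end

section
/- Suppose ᾱ ∈ ℝ^n maximizes D over ℝ^n, i.e. D(α) ≤ D(ᾱ) for all α ∈ ℝ^n. Then for every α ∈ ℝ^n, ‖α − ᾱ‖² ≤ 2⟨g(α), ᾱ − α⟩, where g(α) = Xβ(α) − α − y. -/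
noncomputable section

private lemma psi_super' (l0 l1 l2 : ℝ) (hl0 : 0 < l0) (hl1 : 0 ≤ l1) (hl2 : 0 < l2) (t s : ℝ) :
    psi l0 l1 l2 s ≤ psi l0 l1 l2 t + (-(2*l2) * Bth l0 l1 l2 t) * (s - t) := by
  have ha2 : Real.sqrt (l0*l2) ^ 2 = l0*l2 := Real.sq_sqrt (by positivity)
  have hapos : 0 < Real.sqrt (l0*l2) := Real.sqrt_pos.mpr (by positivity)
  set a := Real.sqrt (l0*l2) with ha
  have hsig : Real.sign t * t = |t| := by
    rcases lt_trichotomy t 0 with h|h|h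
    · rw [Real.sign_of_neg h, abs_of_neg h]; ring
    · simp [h]
    · rw [Real.sign_of_pos h, abs_of_pos h]; ring
  have hsig2 : Real.sign t * s ≤ |s| := by
    rcases lt_trichotomy t 0 with h|h|h
    · rw [Real.sign_of_neg h]; simpa using neg_le_abs s
    · simp [h, abs_nonneg]
    · rw [Real.sign_of_pos h]; simpa using le_abs_self s
  have h3 : Real.sign t * (s - t) ≤ |s| - |t| := by
    have : Real.sign t * (s - t) = Real.sign t * s - |t| := by rw [mul_sub, hsig]
    linarith
  unfold psi Bth eta0
  set c := l1 / (2 * l2) with hcdef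
  have hcc : 2 * l2 * c = l1 := by rw [hcdef]; field_simp [hl2.ne']
  have hcnn : 0 ≤ c := by positivity
  split_ifs with h1 h2 h2
  · rw [div_le_iff₀ (by positivity)] at h1 h2
    have hv : a ≤ l2 * (|t| - c) := by nlinarith
    have hvnn : 0 ≤ |t| - c := by nlinarith
    have key : -(2*l2) * (Real.sign t * (|t| - c)) * (s - t)
        = (-(2*l2) * (|t| - c)) * (Real.sign t * (s - t)) := by ring
    have hb : (-(2*l2) * (|t| - c)) * (Real.sign t * (s - t))
        ≥ (-(2*l2) * (|t| - c)) * (|s| - |t|) := by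
      apply mul_le_mul_of_nonpos_left h3 (by nlinarith)
    nlinarith [sq_nonneg ((|s| - c) - (|t| - c))]
  · rw [div_le_iff₀ (by positivity)] at h1
    have hu : a ≤ l2 * (|s| - c) := by nlinarith
    nlinarith [sq_nonneg (l2 * (|s| - c) - a)]
  · rw [div_le_iff₀ (by positivity)] at h2
    rw [not_le, lt_div_iff₀ (by positivity)] at h1
    have hv : a ≤ l2 * (|t| - c) := by nlinarith
    have hu : l2 * (|s| - c) < a := by nlinarith
    have hvnn : 0 ≤ |t| - c := by nlinarith
    have key : -(2*l2) * (Real.sign t * (|t| - c)) * (s - t)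
        = (-(2*l2) * (|t| - c)) * (Real.sign t * (s - t)) := by ring
    have hb : (-(2*l2) * (|t| - c)) * (Real.sign t * (s - t))
        ≥ (-(2*l2) * (|t| - c)) * (|s| - |t|) := by
      apply mul_le_mul_of_nonpos_left h3 (by nlinarith)
    have main : (0:ℝ) ≤ -l2*(|t|-c)^2 + l0 + (-(2*l2)*(|t|-c))*(|s|-|t|) := by
      nlinarith [sq_nonneg (l2*(|t|-c) - a),
        mul_nonneg (by linarith : (0:ℝ) ≤ a - l2*(|s|-c)) (by nlinarith : (0:ℝ) ≤ l2*(|t|-c))]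
    linarith [key ▸ hb]
  · simp

private lemma dual_upper' {n p : ℕ} (x : Fin p → EuclideanSpace ℝ (Fin n))
    (y : EuclideanSpace ℝ (Fin n)) (l0 l1 l2 : ℝ)
    (hl0 : 0 < l0) (hl1 : 0 ≤ l1) (hl2 : 0 < l2)
    (a b : EuclideanSpace ℝ (Fin n)) :
    Dobj x y l0 l1 l2 b ≤ Dobj x y l0 l1 l2 a
      + (inner ℝ (Xmul x (betaOf x l0 l1 l2 a) - a - y) (b - a) : ℝ)
      - (1/2) * ‖b - a‖^2 := by
  have quad : -(1/2:ℝ) * ‖b‖^2 - (inner ℝ y b : ℝ)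
      = -(1/2) * ‖a‖^2 - (inner ℝ y a : ℝ)
        + (inner ℝ (-a - y) (b - a) : ℝ) - (1/2) * ‖b - a‖^2 := by
    have hb : b = a + (b - a) := by abel
    have hn : ‖b‖^2 = ‖a‖^2 + 2 * (inner ℝ a (b-a) : ℝ) + ‖b - a‖^2 := by
      conv_lhs => rw [hb]
      rw [norm_add_sq_real]
    have hy : (inner ℝ y b : ℝ) = (inner ℝ y a : ℝ) + (inner ℝ y (b - a) : ℝ) := by
      conv_lhs => rw [hb]
      rw [inner_add_right]
    have hsub : (inner ℝ (-a - y) (b - a) : ℝ)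
        = -(inner ℝ a (b-a) : ℝ) - (inner ℝ y (b-a) : ℝ) := by
      rw [inner_sub_left, inner_neg_left]
    rw [hn, hy, hsub]; ring
  have sum : ∑ j : Fin p, psi l0 l1 l2 (etav x l2 b j)
      ≤ (∑ j : Fin p, psi l0 l1 l2 (etav x l2 a j))
        + (inner ℝ (Xmul x (betaOf x l0 l1 l2 a)) (b - a) : ℝ) := by
    have hX : (inner ℝ (Xmul x (betaOf x l0 l1 l2 a)) (b - a) : ℝ)
        = ∑ j : Fin p, betaOf x l0 l1 l2 a j * (inner ℝ (x j) (b - a) : ℝ) := by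
      rw [Xmul, sum_inner]
      exact Finset.sum_congr rfl fun j _ => real_inner_smul_left _ _ _
    rw [hX, ← Finset.sum_add_distrib]
    apply Finset.sum_le_sum
    intro j _
    have h := psi_super' l0 l1 l2 hl0 hl1 hl2 (etav x l2 a j) (etav x l2 b j)
    have hdiff : etav x l2 b j - etav x l2 a j = -(inner ℝ (x j) (b - a) : ℝ) / (2 * l2) := by
      rw [etav, etav, inner_sub_right]; ring
    have heq : (-(2*l2) * Bth l0 l1 l2 (etav x l2 a j)) * (etav x l2 b j - etav x l2 a j)
        = betaOf x l0 l1 l2 a j * (inner ℝ (x j) (b - a) : ℝ) := by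
      rw [hdiff, betaOf]
      field_simp
    linarith [heq ▸ h]
  have expand : (inner ℝ (Xmul x (betaOf x l0 l1 l2 a) - a - y) (b - a) : ℝ)
      = (inner ℝ (Xmul x (betaOf x l0 l1 l2 a)) (b - a) : ℝ) + (inner ℝ (-a - y) (b - a) : ℝ) := by
    rw [inner_sub_left, inner_sub_left, inner_sub_left, inner_neg_left]; ring
  rw [Dobj, Dobj, expand]
  linarith [quad, sum]

/-- distance to the dual maximizer is controlled by the supergradient. -/
theorem stmt11 (n p : ℕ) (x : Fin p → EuclideanSpace ℝ (Fin n))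
    (y : EuclideanSpace ℝ (Fin n)) (l0 l1 l2 : ℝ)
    (hl0 : 0 < l0) (hl1 : 0 ≤ l1) (hl2 : 0 < l2)
    (αb : EuclideanSpace ℝ (Fin n))
    (hmax : ∀ α : EuclideanSpace ℝ (Fin n), Dobj x y l0 l1 l2 α ≤ Dobj x y l0 l1 l2 αb)
    (g : EuclideanSpace ℝ (Fin n) → EuclideanSpace ℝ (Fin n))
    (hg : ∀ α, g α = Xmul x (betaOf x l0 l1 l2 α) - α - y) :
    ∀ α : EuclideanSpace ℝ (Fin n),
      ‖α - αb‖ ^ 2 ≤ 2 * (inner ℝ (g α) (αb - α) : ℝ) := by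
  intro α
  have key := dual_upper' x y l0 l1 l2 hl0 hl1 hl2 α αb
  have hD := hmax α
  rw [hg α, norm_sub_rev]
  linarith
end
end

section
/- Feature-inclusion lower-bound rule: suppose (β̄, ᾱ) ∈ ℝ^p × ℝ^n is a saddle point of L. Let α ∈ ℝ^n, β ∈ ℝ^p and set r = √(2(P(β) − D(α))). If an index j satisfies |⟨x_j, α⟩| − ‖x_j‖·r > 2√(λ₀λ₂) + λ₁, then β̄_j ≠ 0. -/
noncomputable section

-- scalar lemma: psi t ≤ (-2 l2 t) b + l0·1{b≠0} + l1|b| + l2 b²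
lemma psi_le_aux_s14 (l0 l1 l2 : ℝ) (hl0 : 0 < l0) (hl1 : 0 ≤ l1) (hl2 : 0 < l2) (t b : ℝ) :
    (if (2 * Real.sqrt (l0 * l2) + l1) / (2 * l2) ≤ |t| then
        -l2 * (|t| - l1 / (2 * l2))^2 + l0 else 0)
      ≤ (-2*l2*t)*b + (if b = 0 then 0 else l0) + l1 * |b| + l2 * b^2 := by
  set q := Real.sqrt (l0 * l2) with hqdef
  have hq0 : 0 ≤ q := Real.sqrt_nonneg _
  have hq2 : q^2 = l0 * l2 := Real.sq_sqrt (by positivity)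
  have habs : (-2*l2*t)*b ≥ -(2 * l2 * |t| * |b|) := by
    have h1 : (2*l2*t)*b ≤ |(2*l2*t)*b| := le_abs_self _
    have h2 : |(2*l2*t)*b| = 2 * l2 * |t| * |b| := by
      rw [abs_mul, abs_mul, abs_mul]
      simp [abs_of_pos hl2]
    nlinarith [h1, h2]
  have hb0 : 0 ≤ |b| := abs_nonneg b
  have hm : 2*l2*(|t| - l1/(2*l2)) = 2*l2*|t| - l1 := by field_simp
  split_ifs with h hb hb
  · -- eta0 ≤ |t|, b = 0
    subst hb
    have h' : 2*q + l1 ≤ 2*l2*|t| := by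
      rw [div_le_iff₀ (by positivity)] at h; nlinarith [h]
    simp only [abs_zero]
    nlinarith [sq_nonneg (2*l2*(|t| - l1/(2*l2)) - 2*q), hm, hq2, hl2, hq0]
  · -- eta0 ≤ |t|, b ≠ 0
    nlinarith [sq_nonneg (|b| - (|t| - l1/(2*l2))), habs, hm, hl2, sq_abs b]
  · -- |t| < eta0, b = 0
    subst hb; simp
  · -- |t| < eta0, b ≠ 0
    push_neg at h
    have h' : 2*l2*|t| < 2*q + l1 := by
      rw [lt_div_iff₀ (by positivity)] at h; nlinarith [h]
    have hbpos : 0 < |b| := abs_pos.mpr hb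
    have key : 0 ≤ l2*|b|^2 - 2*q*|b| + l0 := by
      nlinarith [sq_nonneg (l2*|b| - q), hq2, hl2]
    rw [← sq_abs b]
    nlinarith [key, habs, mul_lt_mul_of_pos_right h' hbpos]

section Helpers

variable {n p : ℕ}

lemma inner_Xmul (x : Fin p → EuclideanSpace ℝ (Fin n)) (α : EuclideanSpace ℝ (Fin n))
    (β : EuclideanSpace ℝ (Fin p)) :
    (inner ℝ α (Xmul x β) : ℝ) = ∑ j, β j * (inner ℝ α (x j) : ℝ) := by
  simp only [Xmul, inner_sum, real_inner_smul_right]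

lemma normsq_eq (β : EuclideanSpace ℝ (Fin p)) : ‖β‖^2 = ∑ j, (β j)^2 := by
  rw [EuclideanSpace.norm_eq, Real.sq_sqrt (by positivity)]
  simp [sq_abs]

lemma zeroNorm_eq (β : EuclideanSpace ℝ (Fin p)) :
    zeroNorm β = ∑ j, if β j = 0 then (0:ℝ) else 1 := by
  unfold zeroNorm
  rw [Finset.card_filter]
  push_cast
  exact Finset.sum_congr rfl fun j _ => by by_cases h : β j = 0 <;> simp [h]

lemma sum_update_eq (βb : Fin p → ℝ) (j : Fin p) (hj : βb j = 0) (b : ℝ)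
    (g : Fin p → ℝ → ℝ) (hg : ∀ k, g k 0 = 0) :
    ∑ k, g k (Function.update βb j b k) = (∑ k, g k (βb k)) + g j b := by
  rw [← Finset.add_sum_erase _ (fun k => g k (Function.update βb j b k)) (Finset.mem_univ j),
      ← Finset.add_sum_erase _ (fun k => g k (βb k)) (Finset.mem_univ j)]
  rw [Function.update_self, hj, hg j,
    Finset.sum_congr rfl (fun k hk => by rw [Function.update_of_ne (Finset.ne_of_mem_erase hk)])]
  ring

lemma dobj_le_lag (x : Fin p → EuclideanSpace ℝ (Fin n)) (y : EuclideanSpace ℝ (Fin n))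
    (l0 l1 l2 : ℝ) (hl0 : 0 < l0) (hl1 : 0 ≤ l1) (hl2 : 0 < l2)
    (βb : EuclideanSpace ℝ (Fin p)) (α : EuclideanSpace ℝ (Fin n)) :
    Dobj x y l0 l1 l2 α ≤ Lag x y l0 l1 l2 βb α := by
  unfold Dobj Lag
  rw [inner_Xmul, zeroNorm_eq, normsq_eq βb]
  unfold oneNorm
  have key : ∑ j, psi l0 l1 l2 (etav x l2 α j)
      ≤ ∑ j, (βb j * (inner ℝ α (x j) : ℝ) + l0 * (if βb j = 0 then (0:ℝ) else 1)
          + l1 * |βb j| + l2 * (βb j)^2) := by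
    apply Finset.sum_le_sum
    intro j _
    have h2l2 : (-2*l2) * etav x l2 α j = (inner ℝ α (x j) : ℝ) := by
      unfold etav
      rw [real_inner_comm]
      field_simp
    have base := psi_le_aux_s14 l0 l1 l2 hl0 hl1 hl2 (etav x l2 α j) (βb j)
    have hcross : (-2*l2*etav x l2 α j) * βb j = βb j * (inner ℝ α (x j) : ℝ) := by
      rw [show (-2*l2*etav x l2 α j) * βb j = (-2 * l2 * etav x l2 α j) * βb j from rfl, h2l2]
      ring
    unfold psi eta0
    rcases eq_or_ne (βb j) 0 with h | h
    · simp only [if_pos h, mul_zero] at base ⊢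
      linarith [base, hcross]
    · simp only [if_neg h, mul_one] at base ⊢
      linarith [base, hcross]
  have e1 : ∑ j, (βb j * (inner ℝ α (x j) : ℝ) + l0 * (if βb j = 0 then (0:ℝ) else 1)
          + l1 * |βb j| + l2 * (βb j)^2)
      = (∑ j, βb j * (inner ℝ α (x j) : ℝ)) + l0 * (∑ j, if βb j = 0 then (0:ℝ) else 1)
          + l1 * (∑ j, |βb j|) + l2 * (∑ j, (βb j)^2) := by
    rw [Finset.mul_sum, Finset.mul_sum, Finset.mul_sum, ← Finset.sum_add_distrib,
      ← Finset.sum_add_distrib, ← Finset.sum_add_distrib]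
  rw [e1] at key
  linarith

lemma lag_eq (x : Fin p → EuclideanSpace ℝ (Fin n)) (y : EuclideanSpace ℝ (Fin n))
    (l0 l1 l2 : ℝ) (βb : EuclideanSpace ℝ (Fin p)) (α : EuclideanSpace ℝ (Fin n)) :
    Lag x y l0 l1 l2 βb α = (inner ℝ α (Xmul x βb - y) : ℝ) - (1/2)*‖α‖^2
      + (l0 * zeroNorm βb + l1 * oneNorm βb + l2 * ‖βb‖^2) := by
  unfold Lag
  rw [inner_sub_right, real_inner_comm α y]
  ring

end Helpers

set_option maxHeartbeats 1000000

/-- feature-inclusion lower-bound rule. -/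
theorem stmt14 (n p : ℕ) (x : Fin p → EuclideanSpace ℝ (Fin n))
    (y : EuclideanSpace ℝ (Fin n)) (l0 l1 l2 : ℝ)
    (hl0 : 0 < l0) (hl1 : 0 ≤ l1) (hl2 : 0 < l2)
    (βb : EuclideanSpace ℝ (Fin p)) (αb : EuclideanSpace ℝ (Fin n))
    (hsad : IsSaddle x y l0 l1 l2 βb αb)
    (α : EuclideanSpace ℝ (Fin n)) (β : EuclideanSpace ℝ (Fin p))
    (r : ℝ) (hr : r = Real.sqrt (2 * (Pobj x y l0 l1 l2 β - Dobj x y l0 l1 l2 α)))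
    (j : Fin p)
    (hinc : 2 * Real.sqrt (l0 * l2) + l1 < |(inner ℝ (x j) α : ℝ)| - ‖x j‖ * r) :
    βb j ≠ 0 := by
  -- Step 1: αb = Xmul x βb - y
  set v := Xmul x βb - y with hvdef
  have hveq : v = αb := by
    have h1 := hsad.1 v
    rw [lag_eq, lag_eq] at h1
    have hvv : (inner ℝ v v : ℝ) = ‖v‖^2 := real_inner_self_eq_norm_sq v
    have hexp : ‖v - αb‖^2 = ‖v‖^2 - 2*(inner ℝ v αb : ℝ) + ‖αb‖^2 := norm_sub_sq_real v αb
    have hc : (inner ℝ αb v : ℝ) = inner ℝ v αb := real_inner_comm _ _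
    have h0 : ‖v - αb‖^2 ≤ 0 := by rw [hexp]; rw [← hvdef] at h1; linarith
    have h0' : ‖v - αb‖ = 0 := by nlinarith [norm_nonneg (v - αb), sq_nonneg ‖v - αb‖]
    have := norm_sub_eq_zero_iff.mp h0'
    exact this
  -- Step 2: strong concavity identity
  have hquad : ∀ α' : EuclideanSpace ℝ (Fin n),
      Lag x y l0 l1 l2 βb αb - Lag x y l0 l1 l2 βb α' = (1/2)*‖α' - αb‖^2 := by
    intro α'
    rw [lag_eq, lag_eq, ← hvdef, hveq]
    have h1 : (inner ℝ αb αb : ℝ) = ‖αb‖^2 := real_inner_self_eq_norm_sq αb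
    have h2 : ‖α' - αb‖^2 = ‖α'‖^2 - 2*(inner ℝ α' αb : ℝ) + ‖αb‖^2 := norm_sub_sq_real α' αb
    linarith
  -- Step 3: Lag β' αb ≤ Pobj β'
  have hPle : ∀ β' : EuclideanSpace ℝ (Fin p),
      Lag x y l0 l1 l2 β' αb ≤ Pobj x y l0 l1 l2 β' := by
    intro β'
    unfold Lag Pobj
    have h1 : ‖(y - Xmul x β') + αb‖^2
        = ‖y - Xmul x β'‖^2 + 2*(inner ℝ (y - Xmul x β') αb : ℝ) + ‖αb‖^2 :=
      norm_add_sq_real _ _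
    have h2 : (inner ℝ (y - Xmul x β') αb : ℝ)
        = (inner ℝ y αb : ℝ) - (inner ℝ αb (Xmul x β') : ℝ) := by
      rw [inner_sub_left, real_inner_comm (Xmul x β') αb]
    nlinarith [sq_nonneg ‖(y - Xmul x β') + αb‖, h1, h2]
  -- Step 4: gap bound
  have hDL := dobj_le_lag x y l0 l1 l2 hl0 hl1 hl2 βb α
  have hkey : (1/2)*‖α - αb‖^2 ≤ Pobj x y l0 l1 l2 β - Dobj x y l0 l1 l2 α := by
    have h1 := hquad α
    have h2 := hPle β
    have h3 := hsad.2 β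
    linarith
  have hrr : ‖α - αb‖ ≤ r := by
    rw [hr, show ‖α - αb‖ = Real.sqrt (‖α - αb‖^2) from (Real.sqrt_sq (norm_nonneg _)).symm]
    exact Real.sqrt_le_sqrt (by linarith)
  -- Step 5: |⟨x j, αb⟩| > threshold
  have hs : 2*Real.sqrt (l0*l2) + l1 < |(inner ℝ (x j) αb : ℝ)| := by
    have hcs : |(inner ℝ (x j) (α - αb) : ℝ)| ≤ ‖x j‖ * ‖α - αb‖ := abs_real_inner_le_norm _ _
    have hsplit : (inner ℝ (x j) α : ℝ) = (inner ℝ (x j) αb : ℝ) + (inner ℝ (x j) (α - αb) : ℝ) := by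
      rw [inner_sub_right]; ring
    have h1 : |(inner ℝ (x j) α : ℝ)| ≤ |(inner ℝ (x j) αb : ℝ)| + ‖x j‖ * ‖α - αb‖ := by
      rw [hsplit]; exact le_trans (abs_add_le _ _) (by linarith)
    have h2 : ‖x j‖ * ‖α - αb‖ ≤ ‖x j‖ * r := mul_le_mul_of_nonneg_left hrr (norm_nonneg _)
    linarith
  -- Step 6: conclude
  intro hj0
  set s : ℝ := (inner ℝ αb (x j) : ℝ) with hsdef
  have hss : |s| = |(inner ℝ (x j) αb : ℝ)| := by rw [hsdef, real_inner_comm]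
  have hspos : 0 < |s| := by
    rw [hss]; nlinarith [Real.sqrt_nonneg (l0*l2), hs]
  have hsne : s ≠ 0 := fun h => by simp [h] at hspos
  set c := Real.sqrt (l0/l2) with hcdef
  have hc0 : 0 < c := Real.sqrt_pos.mpr (by positivity)
  have hc2 : c^2 = l0/l2 := Real.sq_sqrt (by positivity)
  set b : ℝ := -(Real.sign s) * c with hbdef
  have hsign : |Real.sign s| = 1 ∧ Real.sign s * s = |s| := by
    rcases lt_trichotomy s 0 with h | h | h
    · rw [Real.sign_of_neg h, abs_of_neg h]; norm_num
    · exact absurd h hsne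
    · rw [Real.sign_of_pos h, abs_of_pos h]; norm_num
  have hbne : b ≠ 0 := by
    rw [hbdef]
    intro h
    rcases mul_eq_zero.mp h with h' | h'
    · have : |Real.sign s| = 0 := by rw [neg_eq_zero] at h'; simp [h']
      rw [hsign.1] at this; norm_num at this
    · exact absurd h' (ne_of_gt hc0)
  have habsb : |b| = c := by
    rw [hbdef, abs_mul, abs_neg, hsign.1, one_mul, abs_of_pos hc0]
  have hsq : Real.sign s ^ 2 = 1 := by
    rw [← sq_abs, hsign.1]; norm_num
  have hb2 : b^2 = l0/l2 := by
    have h' : b^2 = Real.sign s ^ 2 * c ^ 2 := by rw [hbdef]; ring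
    rw [h', hsq, one_mul, hc2]
  have hbs : b * s = -(c * |s|) := by
    rw [hbdef, ← hsign.2]; ring
  -- the Lagrangian difference
  have hdiff : Lag x y l0 l1 l2 (WithLp.toLp 2 (Function.update (βb : Fin p → ℝ) j b)) αb
      = Lag x y l0 l1 l2 βb αb + (b*s + l0 + l1*|b| + l2*b^2) := by
    unfold Lag
    rw [inner_Xmul, inner_Xmul, zeroNorm_eq, zeroNorm_eq,
      normsq_eq (WithLp.toLp 2 (Function.update (βb : Fin p → ℝ) j b)), normsq_eq βb]
    unfold oneNorm
    simp only [PiLp.toLp_apply]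
    rw [sum_update_eq βb j hj0 b (fun k t => t * (inner ℝ αb (x k) : ℝ)) (fun k => by ring),
        sum_update_eq βb j hj0 b (fun k t => |t|) (fun k => by simp),
        sum_update_eq βb j hj0 b (fun k t => if t = 0 then (0:ℝ) else 1) (fun k => by simp),
        sum_update_eq βb j hj0 b (fun k t => t^2) (fun k => by simp)]
    rw [if_neg hbne, ← hsdef]
    ring
  have hfin := hsad.2 (WithLp.toLp 2 (Function.update (βb : Fin p → ℝ) j b))
  rw [hdiff] at hfin
  have h0le : 0 ≤ b*s + l0 + l1*|b| + l2*b^2 := by linarith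
  rw [hbs, habsb, hb2] at h0le
  have hl2d : l2 * (l0/l2) = l0 := by field_simp
  have hcq : c * Real.sqrt (l0*l2) = l0 := by
    rw [hcdef, ← Real.sqrt_mul (by positivity)]
    rw [show l0/l2*(l0*l2) = l0^2 by field_simp]
    exact Real.sqrt_sq hl0.le
  rw [hss] at hspos
  have hfinal : c * (2*Real.sqrt (l0*l2) + l1) < c * |(inner ℝ (x j) αb : ℝ)| :=
    mul_lt_mul_of_pos_left hs hc0
  rw [← hss] at hfinal
  nlinarith [hfinal, hcq, h0le, hl2d, hc0, hl1]
end
end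

section
/- Support stability: let ᾱ ∈ ℝ^n be such that x_j ≠ 0 and |η_j(ᾱ)| ≠ η₀ for every j, and let S = {j : β_j(ᾱ) ≠ 0}. Suppose α ∈ ℝ^n satisfies ‖α − ᾱ‖ < 2λ₂·(|η_j(ᾱ)| − η₀)/‖x_j‖ for every j ∈ S and ‖α − ᾱ‖ < 2λ₂·(η₀ − |η_j(ᾱ)|)/‖x_j‖ for every j ∉ S. Then for every j, β_j(α) ≠ 0 if and only if β_j(ᾱ) ≠ 0; i.e. supp(β(α)) = supp(β(ᾱ)). -/
noncomputable section

lemma eta0_pos (l0 l1 l2 : ℝ) (hl0 : 0 < l0) (hl1 : 0 ≤ l1) (hl2 : 0 < l2) :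
    l1 / (2 * l2) < eta0 l0 l1 l2 := by
  unfold eta0
  have h : 0 < Real.sqrt (l0 * l2) := Real.sqrt_pos.mpr (by positivity)
  rw [div_lt_div_iff₀ (by positivity) (by positivity)]
  nlinarith

lemma Bth_ne_zero_iff (l0 l1 l2 : ℝ) (hl0 : 0 < l0) (hl1 : 0 ≤ l1) (hl2 : 0 < l2) (t : ℝ) :
    Bth l0 l1 l2 t ≠ 0 ↔ eta0 l0 l1 l2 ≤ |t| := by
  have h0 := eta0_pos l0 l1 l2 hl0 hl1 hl2
  have hl1' : 0 ≤ l1 / (2 * l2) := by positivity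
  unfold Bth
  constructor
  · intro h
    by_contra hc
    simp [hc] at h
  · intro h
    rw [if_pos h]
    have ht : t ≠ 0 := by
      intro h'; rw [h'] at h; simp at h; linarith
    have hs : Real.sign t ≠ 0 := by
      rcases lt_trichotomy t 0 with h'|h'|h'
      · rw [Real.sign_of_neg h']; norm_num
      · exact absurd h' ht
      · rw [Real.sign_of_pos h']; norm_num
    have : l1 / (2 * l2) < |t| := lt_of_lt_of_le h0 h
    exact mul_ne_zero hs (by linarith)

lemma eta_diff_lt {n p : ℕ} (x : Fin p → EuclideanSpace ℝ (Fin n)) (l2 : ℝ) (hl2 : 0 < l2)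
    (αb α : EuclideanSpace ℝ (Fin n)) (j : Fin p) (c : ℝ) (hxj : x j ≠ 0)
    (h : ‖α - αb‖ < 2 * l2 * c / ‖x j‖) :
    |etav x l2 α j - etav x l2 αb j| < c := by
  have hxn : 0 < ‖x j‖ := norm_pos_iff.mpr hxj
  have heq : etav x l2 α j - etav x l2 αb j = -(inner ℝ (x j) (α - αb) : ℝ) / (2 * l2) := by
    unfold etav
    rw [inner_sub_right]
    ring
  rw [heq, abs_div, abs_neg, abs_of_pos (by positivity : (0:ℝ) < 2 * l2)]
  have hcs : |(inner ℝ (x j) (α - αb) : ℝ)| ≤ ‖x j‖ * ‖α - αb‖ := abs_real_inner_le_norm _ _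
  have h2 : ‖x j‖ * ‖α - αb‖ < 2 * l2 * c := by
    rw [lt_div_iff₀ hxn] at h
    nlinarith
  rw [div_lt_iff₀ (by positivity)]
  nlinarith

/-- support stability near a dual point. -/
theorem stmt15 (n p : ℕ) (x : Fin p → EuclideanSpace ℝ (Fin n)) (l0 l1 l2 : ℝ)
    (hl0 : 0 < l0) (hl1 : 0 ≤ l1) (hl2 : 0 < l2)
    (αb α : EuclideanSpace ℝ (Fin n))
    (hx : ∀ j : Fin p, x j ≠ 0)
    (hne : ∀ j : Fin p, |etav x l2 αb j| ≠ eta0 l0 l1 l2)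
    (hS : ∀ j : Fin p, betaOf x l0 l1 l2 αb j ≠ 0 →
        ‖α - αb‖ < 2 * l2 * (|etav x l2 αb j| - eta0 l0 l1 l2) / ‖x j‖)
    (hSc : ∀ j : Fin p, betaOf x l0 l1 l2 αb j = 0 →
        ‖α - αb‖ < 2 * l2 * (eta0 l0 l1 l2 - |etav x l2 αb j|) / ‖x j‖) :
    ∀ j : Fin p, betaOf x l0 l1 l2 α j ≠ 0 ↔ betaOf x l0 l1 l2 αb j ≠ 0 := by
  intro j
  rw [show betaOf x l0 l1 l2 α j = Bth l0 l1 l2 (etav x l2 α j) from rfl,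
      show betaOf x l0 l1 l2 αb j = Bth l0 l1 l2 (etav x l2 αb j) from rfl,
      Bth_ne_zero_iff l0 l1 l2 hl0 hl1 hl2, Bth_ne_zero_iff l0 l1 l2 hl0 hl1 hl2]
  have habs : |etav x l2 α j| - |etav x l2 αb j| ≤ |etav x l2 α j - etav x l2 αb j| ∧
      |etav x l2 αb j| - |etav x l2 α j| ≤ |etav x l2 α j - etav x l2 αb j| := by
    constructor
    · exact abs_sub_abs_le_abs_sub _ _
    · rw [abs_sub_comm]; exact abs_sub_abs_le_abs_sub _ _
  by_cases hz : betaOf x l0 l1 l2 αb j = 0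
  · have hlt : |etav x l2 αb j| < eta0 l0 l1 l2 := by
      have := (Bth_ne_zero_iff l0 l1 l2 hl0 hl1 hl2 (etav x l2 αb j)).not
      have h2 : ¬ eta0 l0 l1 l2 ≤ |etav x l2 αb j| := by
        rw [← this]; simpa [betaOf] using hz
      linarith [lt_of_not_ge h2]
    have hd := eta_diff_lt x l2 hl2 αb α j _ (hx j) (hSc j hz)
    constructor
    · intro h; linarith [habs.1]
    · intro h; linarith
  · have hge : eta0 l0 l1 l2 < |etav x l2 αb j| := by
      have h2 : eta0 l0 l1 l2 ≤ |etav x l2 αb j| :=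
        (Bth_ne_zero_iff l0 l1 l2 hl0 hl1 hl2 (etav x l2 αb j)).mp (by simpa [betaOf] using hz)
      exact lt_of_le_of_ne h2 (Ne.symm (hne j))
    have hd := eta_diff_lt x l2 hl2 αb α j _ (hx j) (hS j hz)
    constructor
    · intro h; linarith
    · intro h; linarith [habs.2]
end
end

section
/- Let λ₀ > 0, λ₁ ≥ 0, λ₂ > 0 and b ∈ ℝ, and define q(t) = (1/2)(1 + 2λ₂)t² − b·t + λ₁|t| + λ₀·𝟙{t ≠ 0} for t ∈ ℝ. Set s = (|b| − λ₁)/(1 + 2λ₂) and define T(b) = sign(b)·s if s ≥ √(2λ₀/(1 + 2λ₂)) and T(b) = 0 otherwise. Then T(b) is a minimizer of q over ℝ: q(T(b)) ≤ q(t) for all t ∈ ℝ. -/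
noncomputable section


/-- the coordinate-descent thresholding operator `T` minimizes the
one-dimensional objective `q`. -/
theorem stmt16 (l0 l1 l2 b : ℝ) (hl0 : 0 < l0) (hl1 : 0 ≤ l1) (hl2 : 0 < l2)
    (q : ℝ → ℝ)
    (hq : ∀ t, q t = (1/2) * (1 + 2 * l2) * t ^ 2 - b * t + l1 * |t|
        + (if t ≠ 0 then l0 else 0))
    (s : ℝ) (hs : s = (|b| - l1) / (1 + 2 * l2))
    (T : ℝ)
    (hT : T = if Real.sqrt (2 * l0 / (1 + 2 * l2)) ≤ s then Real.sign b * s else 0) :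
    ∀ t : ℝ, q T ≤ q t := by
  have ha : (0:ℝ) < 1 + 2 * l2 := by linarith
  have hane : (1 + 2 * l2) ≠ 0 := ne_of_gt ha
  have has : (1 + 2 * l2) * s = |b| - l1 := by rw [hs]; field_simp
  have hq0 : q 0 = 0 := by simp [hq]
  have hlb : ∀ u : ℝ, u ≠ 0 →
      (1/2) * (1 + 2 * l2) * u ^ 2 - (1 + 2 * l2) * s * |u| + l0 ≤ q u := by
    intro u hu
    rw [hq u, if_pos hu]
    have has' : (1 + 2 * l2) * s * |u| = (|b| - l1) * |u| := by rw [has]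
    have h1 : b * u ≤ |b| * |u| := by rw [← abs_mul]; exact le_abs_self _
    nlinarith [h1, has']
  intro t
  by_cases hcond : Real.sqrt (2 * l0 / (1 + 2 * l2)) ≤ s
  · rw [hT, if_pos hcond]
    have hxnn : (0:ℝ) ≤ 2 * l0 / (1 + 2 * l2) := by positivity
    have hspos : 0 < s :=
      lt_of_lt_of_le (Real.sqrt_pos.2 (by positivity)) hcond
    have hs2' : 2 * l0 ≤ (1 + 2 * l2) * s ^ 2 := by
      have h1 := Real.sq_sqrt hxnn
      have h2 : Real.sqrt (2 * l0 / (1 + 2 * l2)) ^ 2 ≤ s ^ 2 := by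
        nlinarith [Real.sqrt_nonneg (2 * l0 / (1 + 2 * l2))]
      rw [h1] at h2
      rw [div_le_iff₀ ha] at h2
      nlinarith
    have hbpos : 0 < |b| := by nlinarith [abs_nonneg b]
    have hbne : b ≠ 0 := by simpa [abs_pos] using hbpos
    have hsgn : b * Real.sign b = |b| := by
      rcases hbne.lt_or_gt with h | h
      · simp [Real.sign_of_neg h, abs_of_neg h]
      · simp [Real.sign_of_pos h, abs_of_pos h]
    have habs : |Real.sign b * s| = s := by
      rcases hbne.lt_or_gt with h | h
      · rw [Real.sign_of_neg h]; rw [abs_of_nonpos (by linarith)]; ring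
      · rw [Real.sign_of_pos h]; rw [abs_of_nonneg (by linarith)]; ring
    have hsq2 : (Real.sign b * s) ^ 2 = s ^ 2 := by
      rcases hbne.lt_or_gt with h | h
      · rw [Real.sign_of_neg h]; ring
      · rw [Real.sign_of_pos h]; ring
    have hTne : Real.sign b * s ≠ 0 := by
      intro h
      rw [h] at habs
      simp at habs
      exact hspos.ne' habs.symm
    have he2 : b * (Real.sign b * s) = |b| * s := by rw [← hsgn]; ring
    have hqT : q (Real.sign b * s) = l0 - (1/2) * (1 + 2 * l2) * s ^ 2 := by
      rw [hq, if_pos hTne, habs, hsq2, he2]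
      linear_combination s * has
    rw [hqT]
    by_cases ht : t = 0
    · rw [ht, hq0]; nlinarith
    · have := hlb t ht
      nlinarith [sq_nonneg (|t| - s), sq_abs t]
  · rw [hT, if_neg hcond]
    rw [hq0]
    by_cases ht : t = 0
    · rw [ht, hq0]
    · have hlbt := hlb t ht
      push_neg at hcond
      by_cases hsnn : 0 ≤ s
      · have hs2 : s ^ 2 < 2 * l0 / (1 + 2 * l2) :=
          (Real.lt_sqrt hsnn).1 hcond
        rw [lt_div_iff₀ ha] at hs2
        nlinarith [sq_nonneg (|t| - s), sq_abs t]
      · push_neg at hsnn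
        have hmn : (1 + 2 * l2) * s * |t| ≤ 0 :=
          mul_nonpos_of_nonpos_of_nonneg (by nlinarith) (abs_nonneg t)
        nlinarith [sq_nonneg t, hmn]
end
end
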